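/- A topological space X is Scheepers if and only if its Alexandroff duplicate AD(X) is Scheepers. -/
import Mathlib


open Set

/-- The dominating number 𝔡: least cardinality of a dominating family in ℕ^ℕ. -/
noncomputable def dominatingNumber : Cardinal :=
  sInf { c | ∃ D : Set (ℕ → ℕ),
    (∀ g : ℕ → ℕ, ∃ f ∈ D, ∀ᶠ n in Filter.atTop, g n ≤ f n) ∧ c = Cardinal.mk D }

/-- `U` is an open cover of the space `X`. -/
def IsOpenCover {X : Type*} [TopologicalSpace X] (U : Set (Set X)) : Prop :=
  (∀ u ∈ U, IsOpen u) ∧ ⋃₀ U = Set.univ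

/-- The star of a set `A` with respect to a family `U`. -/
def starOf {X : Type*} (A : Set X) (U : Set (Set X)) : Set X :=
  ⋃₀ {B | B ∈ U ∧ (A ∩ B).Nonempty}

/-- The star-Scheepers property (ω-cover form). -/
def StarScheepers (X : Type*) [TopologicalSpace X] : Prop :=
  ∀ U : ℕ → Set (Set X), (∀ n, IsOpenCover (U n)) →
    ∃ V : ℕ → Set (Set X), (∀ n, V n ⊆ U n ∧ (V n).Finite) ∧
      ∀ F : Set X, F.Finite → ∃ n, F ⊆ starOf (⋃₀ V n) (U n)

/-- The strongly star-Scheepers property. -/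
def StronglyStarScheepers (X : Type*) [TopologicalSpace X] : Prop :=
  ∀ U : ℕ → Set (Set X), (∀ n, IsOpenCover (U n)) →
    ∃ F : ℕ → Set X, (∀ n, (F n).Finite) ∧
      ∀ G : Set X, G.Finite → ∃ n, G ⊆ starOf (F n) (U n)

/-- The topology of the Alexandroff duplicate AD(X) on X × Bool:
points (x, true) are isolated, and basic neighbourhoods of (x, false)
are (U × {false,true}) \ {(x, true)} for U an open neighbourhood of x. -/
def ADTop (X : Type*) [TopologicalSpace X] : TopologicalSpace (X × Bool) :=
  TopologicalSpace.generateFrom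
    ({S | ∃ x : X, S = {(x, true)}} ∪
     {S | ∃ (x : X) (U : Set X), IsOpen U ∧ x ∈ U ∧
        S = (U ×ˢ (Set.univ : Set Bool)) \ {(x, true)}})


/-- The Scheepers property U_fin(O, Ω). -/
def Scheepers (X : Type*) [TopologicalSpace X] : Prop :=
  ∀ U : ℕ → Set (Set X), (∀ n, IsOpenCover (U n)) →
    ∃ V : ℕ → Set (Set X), (∀ n, V n ⊆ U n ∧ (V n).Finite) ∧
      ((∃ n, ⋃₀ V n = Set.univ) ∨
        ∀ F : Set X, F.Finite → ∃ n, F ⊆ ⋃₀ V n)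



section AuxAD
open TopologicalSpace

def ADgens (X : Type*) [TopologicalSpace X] : Set (Set (X × Bool)) :=
  ({S | ∃ x : X, S = {(x, true)}} ∪
     {S | ∃ (x : X) (U : Set X), IsOpen U ∧ x ∈ U ∧
        S = (U ×ˢ (Set.univ : Set Bool)) \ {(x, true)}})

lemma ad_isOpen_prod {X : Type*} [TopologicalSpace X] {u : Set X} (hu : IsOpen u) :
    GenerateOpen (ADgens X) (u ×ˢ (univ : Set Bool)) := by
  have : u ×ˢ (univ : Set Bool) =
      ⋃₀ {s | ∃ x ∈ u, s = {(x, true)} ∨ s = (u ×ˢ (univ : Set Bool)) \ {(x, true)}} := by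
    ext ⟨z, b⟩
    constructor
    · rintro ⟨hz, -⟩
      cases b with
      | true => exact ⟨{(z, true)}, ⟨z, hz, Or.inl rfl⟩, rfl⟩
      | false =>
        exact ⟨(u ×ˢ (univ : Set Bool)) \ {(z, true)}, ⟨z, hz, Or.inr rfl⟩,
          ⟨⟨hz, trivial⟩, by simp⟩⟩
    · rintro ⟨s, ⟨x, hx, h | h⟩, hzs⟩
      · subst h; simp at hzs; exact ⟨hzs.1 ▸ hx, trivial⟩
      · subst h; exact hzs.1
  rw [this]
  apply GenerateOpen.sUnion
  rintro s ⟨x, hx, h | h⟩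
  · exact GenerateOpen.basic _ (Or.inl ⟨x, h⟩)
  · exact GenerateOpen.basic _ (Or.inr ⟨x, u, hu, hx, h⟩)

lemma ad_nbhd {X : Type*} [TopologicalSpace X] {W : Set (X × Bool)}
    (hW : GenerateOpen (ADgens X) W) :
    ∀ x : X, (x, false) ∈ W →
      ∃ u : Set X, IsOpen u ∧ x ∈ u ∧ ∃ E : Set X, E.Finite ∧
        (u ×ˢ (univ : Set Bool)) \ (E ×ˢ ({true} : Set Bool)) ⊆ W := by
  induction hW with
  | basic s hs =>
    intro x hx
    rcases hs with ⟨y, rfl⟩ | ⟨y, U, hU, hyU, rfl⟩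
    · simp at hx
    · refine ⟨U, hU, hx.1.1, {y}, finite_singleton _, ?_⟩
      rintro ⟨z, b⟩ ⟨⟨hz, -⟩, hzb⟩
      refine ⟨⟨hz, trivial⟩, ?_⟩
      intro h
      rw [mem_singleton_iff] at h
      exact hzb ⟨show z ∈ ({y} : Set X) from congrArg Prod.fst h,
        show b ∈ ({true} : Set Bool) from congrArg Prod.snd h⟩
  | univ => exact fun x _ => ⟨univ, isOpen_univ, trivial, ∅, finite_empty, fun _ _ => trivial⟩
  | inter s t _ _ ihs iht =>
    intro x hx
    obtain ⟨u1, hu1, hxu1, E1, hE1, hs1⟩ := ihs x hx.1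
    obtain ⟨u2, hu2, hxu2, E2, hE2, hs2⟩ := iht x hx.2
    refine ⟨u1 ∩ u2, hu1.inter hu2, ⟨hxu1, hxu2⟩, E1 ∪ E2, hE1.union hE2, ?_⟩
    rintro ⟨z, b⟩ ⟨⟨⟨hz1, hz2⟩, -⟩, hzE⟩
    simp only [mem_prod, mem_union, mem_singleton_iff, not_and] at hzE
    constructor
    · exact hs1 ⟨⟨hz1, trivial⟩, fun h => hzE (Or.inl h.1) h.2⟩
    · exact hs2 ⟨⟨hz2, trivial⟩, fun h => hzE (Or.inr h.1) h.2⟩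
  | sUnion S _ ih =>
    intro x hx
    obtain ⟨s, hsS, hxs⟩ := hx
    obtain ⟨u, hu, hxu, E, hE, hsub⟩ := ih s hsS x hxs
    exact ⟨u, hu, hxu, E, hE, fun z hz => ⟨s, hsS, hsub hz⟩⟩


lemma ad_isOpen_iff {X : Type*} [TopologicalSpace X] {s : Set (X × Bool)} :
    @IsOpen _ (ADTop X) s ↔ GenerateOpen (ADgens X) s := Iff.rfl

end AuxAD

theorem stmt_12 {X : Type*} [TopologicalSpace X] :
    Scheepers X ↔ @Scheepers (X × Bool) (ADTop X) := by
  constructor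
  · -- forward: X Scheepers → AD(X) Scheepers
    intro hX Ws hWs
    -- trace covers on X
    set U : ℕ → Set (Set X) := fun n =>
      {u : Set X | IsOpen u ∧ ∃ W ∈ Ws n, ∃ E : Set X, E.Finite ∧
        (u ×ˢ (univ : Set Bool)) \ (E ×ˢ ({true} : Set Bool)) ⊆ W} with hUdef
    have hUcov : ∀ n, IsOpenCover (U n) := by
      intro n
      refine ⟨fun u hu => hu.1, ?_⟩
      apply eq_univ_of_forall
      intro x
      have hx : (x, false) ∈ ⋃₀ Ws n := (hWs n).2 ▸ trivial
      obtain ⟨W, hWmem, hxW⟩ := hx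
      obtain ⟨u, hu, hxu, E, hE, hsub⟩ :=
        ad_nbhd (ad_isOpen_iff.mp ((hWs n).1 W hWmem)) x hxW
      exact ⟨u, ⟨hu, W, hWmem, E, hE, hsub⟩, hxu⟩
    obtain ⟨V, hVsub, halt⟩ := hX U hUcov
    -- choose witnesses
    have key : ∀ n (v : Set X), ∃ (W : Set (X × Bool)) (E : Set X), v ∈ V n →
        W ∈ Ws n ∧ E.Finite ∧
          (v ×ˢ (univ : Set Bool)) \ (E ×ˢ ({true} : Set Bool)) ⊆ W := by
      intro n v
      by_cases h : v ∈ V n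
      · obtain ⟨-, W, hW, E, hE, hsub⟩ := (hVsub n).1 h
        exact ⟨W, E, fun _ => ⟨hW, hE, hsub⟩⟩
      · exact ⟨∅, ∅, fun hv => absurd hv h⟩
    choose Wf Ef hkey using key
    have keyT : ∀ n (x : X), ∃ W, W ∈ Ws n ∧ (x, true) ∈ W := by
      intro n x
      have : (x, true) ∈ ⋃₀ Ws n := (hWs n).2 ▸ trivial
      obtain ⟨W, hW, hx⟩ := this
      exact ⟨W, hW, hx⟩
    choose Wt hWt using keyT
    set En : ℕ → Set X := fun n => ⋃ v ∈ V n, Ef n v with hEndef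
    have hEnfin : ∀ n, (En n).Finite := fun n =>
      (hVsub n).2.biUnion fun v hv => (hkey n v hv).2.1
    set V' : ℕ → Set (Set (X × Bool)) := fun n =>
      (Wf n) '' (V n) ∪ (Wt n) '' (En n) with hV'def
    have hV'sub : ∀ n, V' n ⊆ Ws n ∧ (V' n).Finite := by
      intro n
      constructor
      · rintro w (⟨v, hv, rfl⟩ | ⟨x, hx, rfl⟩)
        · exact (hkey n v hv).1
        · exact (hWt n x).1
      · exact (((hVsub n).2.image _).union ((hEnfin n).image _))
    have hcov : ∀ n, (⋃₀ V n) ×ˢ (univ : Set Bool) ⊆ ⋃₀ V' n := by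
      rintro n ⟨z, b⟩ ⟨⟨v, hv, hzv⟩, -⟩
      by_cases h : b = true ∧ z ∈ Ef n v
      · refine ⟨Wt n z, Or.inr ⟨z, ?_, rfl⟩, h.1 ▸ (hWt n z).2⟩
        exact mem_biUnion hv h.2
      · refine ⟨Wf n v, Or.inl ⟨v, hv, rfl⟩, (hkey n v hv).2.2 ⟨⟨hzv, trivial⟩, ?_⟩⟩
        rintro ⟨h1, h2⟩
        exact h ⟨h2, h1⟩
    refine ⟨V', hV'sub, ?_⟩
    rcases halt with ⟨n, hn⟩ | hΩ
    · left
      refine ⟨n, eq_univ_of_forall fun z => hcov n ⟨hn ▸ trivial, trivial⟩⟩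
    · right
      intro G hG
      obtain ⟨n, hn⟩ := hΩ (Prod.fst '' G) (hG.image _)
      exact ⟨n, fun z hz => hcov n ⟨hn ⟨z, hz, rfl⟩, trivial⟩⟩
  · -- backward: AD(X) Scheepers → X Scheepers
    intro hAD U hU
    set Ws : ℕ → Set (Set (X × Bool)) := fun n =>
      (fun u => u ×ˢ (univ : Set Bool)) '' U n with hWsdef
    have hWscov : ∀ n, @IsOpenCover _ (ADTop X) (Ws n) := by
      intro n
      constructor
      · rintro w ⟨u, hu, rfl⟩
        exact ad_isOpen_iff.mpr (ad_isOpen_prod ((hU n).1 u hu))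
      · apply eq_univ_of_forall
        rintro ⟨x, b⟩
        have : x ∈ ⋃₀ U n := (hU n).2 ▸ trivial
        obtain ⟨u, hu, hxu⟩ := this
        exact ⟨u ×ˢ (univ : Set Bool), ⟨u, hu, rfl⟩, hxu, trivial⟩
    obtain ⟨V', hV'sub, halt⟩ := hAD Ws hWscov
    have key : ∀ n (w : Set (X × Bool)), ∃ u : Set X, w ∈ V' n →
        u ∈ U n ∧ w = u ×ˢ (univ : Set Bool) := by
      intro n w
      by_cases h : w ∈ V' n
      · obtain ⟨u, hu, rfl⟩ := (hV'sub n).1 h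
        exact ⟨u, fun _ => ⟨hu, rfl⟩⟩
      · exact ⟨∅, fun hw => absurd hw h⟩
    choose uf huf using key
    set V : ℕ → Set (Set X) := fun n => (uf n) '' (V' n) with hVdef
    have hVsub : ∀ n, V n ⊆ U n ∧ (V n).Finite := by
      intro n
      exact ⟨by rintro v ⟨w, hw, rfl⟩; exact (huf n w hw).1, (hV'sub n).2.image _⟩
    have hsub : ∀ n, ⋃₀ V' n ⊆ (⋃₀ V n) ×ˢ (univ : Set Bool) := by
      rintro n z ⟨w, hw, hzw⟩
      have h := (huf n w hw).2
      rw [h] at hzw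
      exact ⟨⟨uf n w, ⟨w, hw, rfl⟩, hzw.1⟩, trivial⟩
    refine ⟨V, hVsub, ?_⟩
    rcases halt with ⟨n, hn⟩ | hΩ
    · left
      refine ⟨n, eq_univ_of_forall fun x => ?_⟩
      have : (x, false) ∈ ⋃₀ V' n := hn ▸ trivial
      exact (hsub n this).1
    · right
      intro F hF
      obtain ⟨n, hn⟩ := hΩ (F ×ˢ ({false} : Set Bool)) (hF.prod (finite_singleton _))
      refine ⟨n, fun x hx => ?_⟩
      exact (hsub n (hn (show (x, false) ∈ F ×ˢ ({false} : Set Bool) from ⟨hx, rfl⟩))).1
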